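/- Let x > 0, α ∈ S_x of maturity n ≥ 2, and 1 ≤ k ≤ n−1. Then the truncated-and-paid-off transaction (Σ_{i=0}^k α(i)·y^i) + D·y^k lies in S_x if and only if D equals the payoff amount D_k = −(1+kx)·Σ_{i=0}^k α(i)/(1+ix). -/

import Mathlib

/-- The elementary loan `-1 + (1+mx)·yᵐ` of maturity `m`, simple interest rate `x`. -/
noncomputable def elemLoan (x : ℝ) (m : ℕ) : Polynomial ℝ :=
  Polynomial.C (1 + m * x) * Polynomial.X ^ m - 1

/-- The convex cone generated by the elementary loans of simple interest rate `x`: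
the set of conical combinations of the `elemLoan x m`, `m ≥ 1`. -/
noncomputable def Sx (x : ℝ) : Set (Polynomial ℝ) :=
  {α | ∃ (n : ℕ) (c : Fin n → ℝ) (m : Fin n → ℕ), 0 < n ∧ (∀ k, 0 < c k) ∧ (∀ k, 1 ≤ m k) ∧
    α = ∑ k, c k • elemLoan x (m k)}

open Polynomial Finset

/-- The linear functional `p ↦ ∑ p.coeff i / (1 + i x)`. -/
noncomputable def Lmap (x : ℝ) : Polynomial ℝ →ₗ[ℝ] ℝ where
  toFun p := p.sum fun n a => a / (1 + (n : ℝ) * x)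
  map_add' p q := Polynomial.sum_add_index p q _ (fun i => by simp) (fun a b₁ b₂ => add_div _ _ _)
  map_smul' c p := by
    have h : (c • p).sum (fun n a => a / (1 + (n : ℝ) * x))
        = c * p.sum (fun n a => a / (1 + (n : ℝ) * x)) := by
      rw [Polynomial.sum_smul_index _ _ _ (fun i => by simp),
        Polynomial.sum_def, Polynomial.sum_def, Finset.mul_sum]
      exact Finset.sum_congr rfl fun i _ => mul_div_assoc _ _ _
    simpa using h

lemma Lmap_apply (x : ℝ) (p : Polynomial ℝ) :
    Lmap x p = p.sum fun n a => a / (1 + (n : ℝ) * x) := rfl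

lemma Lmap_C_mul_X_pow (x : ℝ) (a : ℝ) (i : ℕ) :
    Lmap x (Polynomial.C a * Polynomial.X ^ i) = a / (1 + (i : ℝ) * x) := by
  rw [Lmap_apply, Polynomial.C_mul_X_pow_eq_monomial, Polynomial.sum_monomial_index _ _ (by simp)]

lemma one_add_mul_pos {x : ℝ} (hx : 0 < x) (i : ℕ) : (0 : ℝ) < 1 + (i : ℝ) * x := by positivity

lemma Lmap_elemLoan {x : ℝ} (hx : 0 < x) (m : ℕ) : Lmap x (elemLoan x m) = 0 := by
  have h1 : (elemLoan x m) = Polynomial.C (1 + (m : ℝ) * x) * Polynomial.X ^ m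
      - Polynomial.C 1 * Polynomial.X ^ 0 := by simp [elemLoan]
  rw [h1, map_sub, Lmap_C_mul_X_pow, Lmap_C_mul_X_pow]
  have := (one_add_mul_pos hx m).ne'
  field_simp
  simp

lemma Lmap_Sx {x : ℝ} (hx : 0 < x) {α : Polynomial ℝ} (hα : α ∈ Sx x) : Lmap x α = 0 := by
  obtain ⟨n, c, m, hn, hc, hm, rfl⟩ := hα
  rw [map_sum]
  simp [Lmap_elemLoan hx]

lemma coeff_elemLoan (x : ℝ) (m i : ℕ) :
    (elemLoan x m).coeff i =
      (if i = m then 1 + (m : ℝ) * x else 0) - (if i = 0 then 1 else 0) := by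
  rw [elemLoan, Polynomial.coeff_sub, Polynomial.coeff_C_mul, Polynomial.coeff_X_pow,
    Polynomial.coeff_one, mul_ite, mul_one, mul_zero]

lemma Sx_coeff_nonneg {x : ℝ} (hx : 0 < x) {α : Polynomial ℝ} (hα : α ∈ Sx x)
    {i : ℕ} (hi : 1 ≤ i) : 0 ≤ α.coeff i := by
  obtain ⟨n, c, m, hn, hc, hm, rfl⟩ := hα
  rw [Polynomial.finset_sum_coeff]
  refine Finset.sum_nonneg fun j _ => ?_
  rw [Polynomial.coeff_smul, smul_eq_mul, coeff_elemLoan, if_neg (by omega : ¬ i = 0), sub_zero]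
  split_ifs with h
  · exact mul_nonneg (hc j).le (one_add_mul_pos hx (m j)).le
  · simp

lemma Sx_coeff_zero_neg {x : ℝ} (hx : 0 < x) {α : Polynomial ℝ} (hα : α ∈ Sx x) :
    α.coeff 0 < 0 := by
  obtain ⟨n, c, m, hn, hc, hm, rfl⟩ := hα
  rw [Polynomial.finset_sum_coeff]
  have h1 : ∀ j ∈ Finset.univ, (c j • elemLoan x (m j)).coeff 0 = -c j := by
    intro j _
    rw [Polynomial.coeff_smul, smul_eq_mul, coeff_elemLoan,
      if_neg (by have := hm j; omega : ¬ (0 : ℕ) = m j), if_pos rfl]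
    ring
  rw [Finset.sum_congr rfl h1]
  have : Nonempty (Fin n) := ⟨⟨0, hn⟩⟩
  have h2 := Finset.sum_pos (fun j (_ : j ∈ Finset.univ) => hc j) Finset.univ_nonempty
  rw [Finset.sum_neg_distrib]
  linarith

theorem payoff_amount_characterization (x : ℝ) (hx : 0 < x)
    (α : Polynomial ℝ) (hα : α ∈ Sx x) (hdeg : 2 ≤ α.natDegree)
    (k : ℕ) (hk1 : 1 ≤ k) (hk2 : k ≤ α.natDegree - 1) (D : ℝ) :
    ((∑ i ∈ Finset.range (k + 1), Polynomial.C (α.coeff i) * Polynomial.X ^ i) +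
        Polynomial.C D * Polynomial.X ^ k ∈ Sx x) ↔
      D = -(1 + k * x) * ∑ i ∈ Finset.range (k + 1), α.coeff i / (1 + i * x) := by
  have hpos : ∀ i : ℕ, (0 : ℝ) < 1 + (i : ℝ) * x := one_add_mul_pos hx
  have hne : ∀ i : ℕ, (1 + (i : ℝ) * x) ≠ 0 := fun i => (hpos i).ne'
  set E : ℝ := ∑ i ∈ Finset.range (k + 1), α.coeff i / (1 + (i : ℝ) * x) with hE
  set β : Polynomial ℝ := (∑ i ∈ Finset.range (k + 1),
      Polynomial.C (α.coeff i) * Polynomial.X ^ i) + Polynomial.C D * Polynomial.X ^ k with hβ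
  have hLβ : Lmap x β = E + D / (1 + (k : ℝ) * x) := by
    rw [hβ, map_add, map_sum, Lmap_C_mul_X_pow, hE]
    congr 1
    exact Finset.sum_congr rfl fun i _ => Lmap_C_mul_X_pow x _ i
  constructor
  · intro hmem
    have h0 : Lmap x β = 0 := Lmap_Sx hx hmem
    rw [hLβ] at h0
    have hk := hne k
    field_simp at h0
    linarith
  · intro hD
    -- basic facts about α
    have hα0 : α.coeff 0 < 0 := Sx_coeff_zero_neg hx hα
    have hLα : Lmap x α = 0 := Lmap_Sx hx hα
    set N := α.natDegree with hN
    have hkN : k ≤ N := by omega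
    have hLα' : ∑ i ∈ Finset.range (N + 1), α.coeff i / (1 + (i : ℝ) * x) = 0 := by
      rw [← hLα, Lmap_apply]
      exact (Polynomial.sum_over_range' α (f := fun n a => a / (1 + (n : ℝ) * x))
        (fun n => zero_div _) (N + 1) (by omega)).symm
    -- the coefficients of the representation
    set b : ℕ → ℝ := fun i =>
      if i = k then (α.coeff k + D) / (1 + (k : ℝ) * x) else α.coeff i / (1 + (i : ℝ) * x)
      with hb
    have hbk : b k = (α.coeff k + D) / (1 + (k : ℝ) * x) := by rw [hb]; simp
    have hbne : ∀ i, i ≠ k → b i = α.coeff i / (1 + (i : ℝ) * x) := by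
      intro i hi; rw [hb]; simp [hi]
    -- nonnegativity of b
    have hrangek : (0 : ℝ) ≤ -∑ i ∈ Finset.range k, α.coeff i / (1 + (i : ℝ) * x) := by
      have hsplit : (∑ i ∈ Finset.Ico 0 k, α.coeff i / (1 + (i : ℝ) * x))
          + ∑ i ∈ Finset.Ico k (N + 1), α.coeff i / (1 + (i : ℝ) * x)
          = ∑ i ∈ Finset.Ico 0 (N + 1), α.coeff i / (1 + (i : ℝ) * x) :=
        Finset.sum_Ico_consecutive _ (Nat.zero_le k) (by omega)
      rw [← Finset.range_eq_Ico, ← Finset.range_eq_Ico, hLα'] at hsplit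
      have htail : (0 : ℝ) ≤ ∑ i ∈ Finset.Ico k (N + 1), α.coeff i / (1 + (i : ℝ) * x) := by
        refine Finset.sum_nonneg fun i hi => ?_
        have hi1 : 1 ≤ i := le_trans hk1 (Finset.mem_Ico.mp hi).1
        exact div_nonneg (Sx_coeff_nonneg hx hα hi1) (hpos i).le
      linarith
    have hEsplit : E = (∑ i ∈ Finset.range k, α.coeff i / (1 + (i : ℝ) * x))
        + α.coeff k / (1 + (k : ℝ) * x) := by
      rw [hE, Finset.sum_range_succ]
    have hbk_eq : b k = α.coeff k / (1 + (k : ℝ) * x) - E := by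
      rw [hbk, hD]
      field_simp
      ring
    have hbk_nonneg : 0 ≤ b k := by
      rw [hbk_eq, hEsplit]
      linarith
    have hb_nonneg : ∀ i ∈ Finset.Ico 1 (k + 1), 0 ≤ b i := by
      intro i hi
      rcases eq_or_ne i k with rfl | h
      · exact hbk_nonneg
      · rw [hbne i h]
        exact div_nonneg (Sx_coeff_nonneg hx hα (Finset.mem_Ico.mp hi).1) (hpos i).le
    -- sum of the b's
    have hbsum : ∑ i ∈ Finset.Ico 1 (k + 1), b i = -α.coeff 0 := by
      rw [Finset.sum_Ico_succ_top hk1]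
      have h2 : ∑ i ∈ Finset.Ico 1 k, b i
          = ∑ i ∈ Finset.Ico 1 k, α.coeff i / (1 + (i : ℝ) * x) :=
        Finset.sum_congr rfl fun i hi => hbne i (by have := (Finset.mem_Ico.mp hi).2; omega)
      have h3 : E = α.coeff 0 + ((∑ i ∈ Finset.Ico 1 k, α.coeff i / (1 + (i : ℝ) * x))
          + α.coeff k / (1 + (k : ℝ) * x)) := by
        rw [hEsplit, Finset.range_eq_Ico, Finset.sum_eq_sum_Ico_succ_bot (by omega : 0 < k)]
        simp
        ring
      rw [h2, hbk_eq]
      linarith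
    -- the representation of β as a combination of elementary loans
    have hbkmul : b k * (1 + (k : ℝ) * x) = α.coeff k + D := by
      rw [hbk, div_mul_cancel₀ _ (hne k)]
    have hrepr : β = ∑ i ∈ Finset.Ico 1 (k + 1), b i • elemLoan x i := by
      have hsm : ∀ i : ℕ, b i • elemLoan x i
          = Polynomial.C (b i * (1 + (i : ℝ) * x)) * Polynomial.X ^ i - Polynomial.C (b i) := by
        intro i
        rw [elemLoan, Polynomial.smul_eq_C_mul, mul_sub, ← mul_assoc, ← Polynomial.C_mul, mul_one]
      rw [Finset.sum_congr rfl (fun i _ => hsm i), Finset.sum_sub_distrib,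
        ← map_sum Polynomial.C b (Finset.Ico 1 (k + 1)), hbsum,
        Finset.sum_Ico_succ_top hk1, hbkmul]
      have h4 : ∑ i ∈ Finset.Ico 1 k, Polynomial.C (b i * (1 + (i : ℝ) * x)) * Polynomial.X ^ i
          = ∑ i ∈ Finset.Ico 1 k, Polynomial.C (α.coeff i) * Polynomial.X ^ i := by
        refine Finset.sum_congr rfl fun i hi => ?_
        rw [hbne i (by have := (Finset.mem_Ico.mp hi).2; omega), div_mul_cancel₀ _ (hne i)]
      rw [h4, hβ, Finset.sum_range_succ, Finset.range_eq_Ico,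
        Finset.sum_eq_sum_Ico_succ_bot (by omega : 0 < k)]
      rw [map_add, map_neg]
      ring
    -- build the witnesses
    set s : Finset ℕ := (Finset.Ico 1 (k + 1)).filter (fun i => b i ≠ 0) with hs
    have hsum_s : ∑ i ∈ s, b i = -α.coeff 0 := by
      rw [hs, Finset.sum_filter_of_ne (fun i _ h => h), hbsum]
    have hsne : s.Nonempty := by
      apply Finset.nonempty_of_sum_ne_zero (f := b)
      rw [hsum_s]
      linarith
    have hsum_se : ∑ i ∈ s, b i • elemLoan x i = ∑ i ∈ Finset.Ico 1 (k + 1), b i • elemLoan x i := by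
      rw [hs]
      exact Finset.sum_filter_of_ne fun i _ h hb0 => h (by rw [hb0, zero_smul])
    refine ⟨s.card, fun j => b ((s.equivFin.symm j : {i // i ∈ s}) : ℕ),
      fun j => ((s.equivFin.symm j : {i // i ∈ s}) : ℕ), Finset.card_pos.mpr hsne, ?_, ?_, ?_⟩
    · intro j
      obtain ⟨hmem, hne0⟩ := Finset.mem_filter.mp (s.equivFin.symm j).2
      exact lt_of_le_of_ne (hb_nonneg _ hmem) (Ne.symm hne0)
    · intro j
      obtain ⟨hmem, -⟩ := Finset.mem_filter.mp (s.equivFin.symm j).2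
      exact (Finset.mem_Ico.mp hmem).1
    · rw [hrepr, ← hsum_se, ← Finset.sum_coe_sort s (fun i => b i • elemLoan x i)]
      exact (Fintype.sum_equiv s.equivFin.symm _ _ (fun j => rfl)).symm
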